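/- For every ε with 0 < ε < 1 and every α ≥ 1, there exist a number of agents N and an instance with two projects whose valuations v_1, v_2 are monotone, anonymous, and subadditive (with v_k(∅)=0), such that no allocation S with payment vector p satisfies simultaneously: (S, p) is stable, Σ_{i∈𝒩} p_i ≤ α·SW(S), and (2−ε)·SW(S) ≥ OPT. That is, no (α, 2−ε)-core stable solution exists. -/
import Mathlib


/-- Lower bound: for every `0 < ε < 1` and every `α ≥ 1` there is an instance with two
projects whose valuations are monotone, anonymous, and subadditive, admitting no
`(α, 2-ε)`-core stable solution: no stable pair with `α`-budget-balanced payments whose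
allocation is a `(2-ε)`-approximation to the optimal welfare. -/
theorem stmt5 (ε α : ℝ) (hε0 : 0 < ε) (hε1 : ε < 1) (hα : 1 ≤ α) :
    ∃ (N : ℕ) (v : Fin 2 → Finset (Fin N) → ℝ),
      (∀ k, v k ∅ = 0) ∧
      (∀ k (T : Finset (Fin N)), 0 ≤ v k T) ∧
      -- monotone
      (∀ k (A B : Finset (Fin N)), A ⊆ B → v k A ≤ v k B) ∧
      -- anonymous
      (∀ k (A B : Finset (Fin N)), A.card = B.card → v k A = v k B) ∧
      -- subadditive
      (∀ k (A B : Finset (Fin N)), v k (A ∪ B) ≤ v k A + v k B) ∧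
      ¬ ∃ (S : Fin 2 → Finset (Fin N)) (p : Fin N → ℝ),
          -- S is an allocation
          (∀ k l, k ≠ l → Disjoint (S k) (S l)) ∧
          Finset.univ.biUnion S = Finset.univ ∧
          -- p is a payment vector
          (∀ i, 0 ≤ p i) ∧
          -- stability
          (∀ k (T : Finset (Fin N)), v k (S k ∪ T) ≤ ∑ i ∈ S k ∪ T, p i) ∧
          -- α-budget balance
          (∑ i, p i ≤ α * ∑ k, v k (S k)) ∧
          -- (2-ε)·SW(S) ≥ OPT
          (∀ S' : Fin 2 → Finset (Fin N),
            (∀ k l, k ≠ l → Disjoint (S' k) (S' l)) →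
            Finset.univ.biUnion S' = Finset.univ →
            ∑ k, v k (S' k) ≤ (2 - ε) * ∑ k, v k (S k)) := by
  obtain ⟨N, hNr⟩ : ∃ n : ℕ, 4 * α / ε + 2 ≤ (n : ℝ) :=
    ⟨⌈4 * α / ε⌉₊ + 2, by push_cast; have := Nat.le_ceil (4 * α / ε); linarith⟩
  have hN0 : N ≠ 0 := by
    intro h
    have hpos : 0 < 4 * α / ε := by positivity
    rw [h] at hNr; norm_num at hNr; linarith
  refine ⟨N, fun k A => if A.card = 0 then 0 else if k = 0 then (if A.card = N then 2 else 1) else ε / 2, ?_, ?_, ?_, ?_, ?_, ?_⟩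
  · intro k; simp
  · intro k T
    dsimp only
    split_ifs <;> linarith
  · intro k A B hAB
    have h1 : A.card ≤ B.card := Finset.card_le_card hAB
    have h2 : B.card ≤ N := by
      simpa using Finset.card_le_univ B
    dsimp only
    split_ifs <;> first | linarith | omega
  · intro k A B h
    simp only [h]
  · intro k A B
    have hAB : (A ∪ B).card ≤ A.card + B.card := Finset.card_union_le A B
    have hA0 : A.card = 0 → (A ∪ B).card = B.card := by
      intro h; rw [Finset.card_eq_zero] at h; simp [h]
    have hB0 : B.card = 0 → (A ∪ B).card = A.card := by
      intro h; rw [Finset.card_eq_zero] at h; simp [h]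
    dsimp only
    split_ifs <;> first | linarith | omega
  · rintro ⟨S, p, hd, hu, hp, hs, hb, ha⟩
    dsimp only at hs hb ha
    have hcardN : (Finset.univ : Finset (Fin N)).card = N := by simp
    -- use the allocation (univ, ∅) as S'
    have happ := ha ![Finset.univ, ∅] (by
        intro k l hkl
        fin_cases k <;> fin_cases l
        · exact absurd rfl hkl
        · exact (Finset.disjoint_empty_right _)
        · exact (Finset.disjoint_empty_left _)
        · exact absurd rfl hkl) (by
        ext i
        simp only [Finset.mem_biUnion, Finset.mem_univ, iff_true, true_and]
        exact ⟨0, Finset.mem_univ i⟩)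
    rw [Fin.sum_univ_two] at happ
    simp only [Matrix.cons_val_zero, Matrix.cons_val_one, Matrix.head_cons] at happ
    rw [Fin.sum_univ_two] at happ hb
    simp only [hcardN, Finset.card_empty, if_pos rfl, if_neg hN0] at happ
    norm_num at happ
    have hS0 : S 0 = Finset.univ := by
      by_contra hne
      have hcne : (S 0).card ≠ N := by
        intro h
        exact hne ((Finset.card_eq_iff_eq_univ (S 0)).mp (by rw [h, Fintype.card_fin]))
      have hX : (if S 0 = ∅ then (0:ℝ) else if (S 0).card = N then 2 else 1) ≤ 1 := by
        split_ifs <;> linarith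
      have hY : (if S 1 = ∅ then (0:ℝ) else ε / 2) ≤ ε / 2 := by
        split_ifs <;> linarith
      nlinarith [happ, hX, hY, hε0, hε1, sq_nonneg ε]
    have hS1 : S 1 = ∅ := by
      have hdis := hd 0 1 (by decide)
      rw [hS0] at hdis
      exact Finset.eq_empty_of_forall_notMem
        (fun i hi => (Finset.disjoint_left.mp hdis (Finset.mem_univ i)) hi)
    have hpay : ∀ i : Fin N, ε / 2 ≤ p i := by
      intro i
      have h := hs 1 {i}
      rw [hS1] at h
      simpa using h
    have hsum : (N : ℝ) * (ε / 2) ≤ ∑ i, p i := by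
      calc (N : ℝ) * (ε / 2) = ∑ _i : Fin N, ε / 2 := by
            rw [Finset.sum_const, Finset.card_univ, Fintype.card_fin, nsmul_eq_mul]
        _ ≤ ∑ i, p i := Finset.sum_le_sum (fun i _ => hpay i)
    rw [hS0, hS1] at hb
    simp only [hcardN, Finset.card_empty, if_pos rfl, if_neg hN0] at hb
    norm_num at hb
    have h4 : 4 * α / ε * ε = 4 * α := div_mul_cancel₀ _ (ne_of_gt hε0)
    nlinarith [h4, mul_le_mul_of_nonneg_right hNr (by linarith : (0:ℝ) ≤ ε / 2), hsum, hb, hε0]
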